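/- Let (X_i)_{i≥0} be a stationary sequence with common distribution function G, let (u_n) satisfy n(1 - G(u_n)) → τ, and suppose there are C > 0, 0 < ς < 1 with |P(X_0 > u_n and X_j > u_n) - (1 - G(u_n))²| ≤ C ς^j for all j, n. With T(n) = (4/log ς⁻¹) log n, we have lim_{k→∞} limsup_{n→∞} n ∑_{j=⌈T(n)⌉+1}^{⌊n/k⌋} P(X_0 > u_n and X_j > u_n) = 0. -/

import Mathlib

open Filter Topology MeasureTheory

/-- Step (2) in the verification of `D'(u_n)`: beyond the decorrelation time
`T(n)`, the joint exceedance probabilities are controlled by decay of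
correlations, and the corresponding part of the `D'(u_n)` sum vanishes. -/
theorem Dprime_step_two
    {Ω : Type*} [MeasurableSpace Ω] (P : Measure Ω) [IsProbabilityMeasure P]
    (X : ℕ → Ω → ℝ) (hmeas : ∀ i, Measurable (X i))
    (G : ℝ → ℝ) (u : ℕ → ℝ) (τ : ℝ)
    (hlevels : Tendsto (fun n : ℕ => (n : ℝ) * (1 - G (u n))) atTop (𝓝 τ))
    (C ς : ℝ) (hC : 0 < C) (hς : ς ∈ Set.Ioo (0 : ℝ) 1)
    (hcov : ∀ j n : ℕ,
      |(P {ω | u n < X 0 ω ∧ u n < X j ω}).toReal - (1 - G (u n)) ^ 2|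
        ≤ C * ς ^ j)
    (T : ℕ → ℝ) (hT : ∀ n : ℕ, T n = 4 / Real.log ς⁻¹ * Real.log n) :
    Tendsto (fun k : ℕ =>
      limsup (fun n : ℕ => (n : ℝ) *
        ∑ j ∈ Finset.Icc (⌈T n⌉₊ + 1) (n / k),
          (P {ω | u n < X 0 ω ∧ u n < X j ω}).toReal) atTop)
      atTop (𝓝 0) := by
  obtain ⟨hς0, hς1⟩ := hς
  have hlogς : Real.log ς < 0 := Real.log_neg hς0 hς1
  set F : ℕ → ℕ → ℝ := fun k n => (n : ℝ) *
    ∑ j ∈ Finset.Icc (⌈T n⌉₊ + 1) (n / k),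
      (P {ω | u n < X 0 ω ∧ u n < X j ω}).toReal with hF
  have hF0 : ∀ k n, 0 ≤ F k n := fun k n =>
    mul_nonneg (Nat.cast_nonneg n)
      (Finset.sum_nonneg fun j _ => ENNReal.toReal_nonneg)
  -- pointwise key bound
  have key : ∀ k : ℕ, 1 ≤ k → ∀ n : ℕ, 1 ≤ n →
      F k n ≤ ((n : ℝ) * (1 - G (u n))) ^ 2 / k + C / (n : ℝ) ^ 2 := by
    intro k hk n hn
    have hn0 : (0 : ℝ) < (n : ℝ) := by exact_mod_cast hn
    have hk0 : (0 : ℝ) < (k : ℝ) := by exact_mod_cast hk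
    -- bound each summand
    have hterm : ∀ j ∈ Finset.Icc (⌈T n⌉₊ + 1) (n / k),
        (P {ω | u n < X 0 ω ∧ u n < X j ω}).toReal
          ≤ (1 - G (u n)) ^ 2 + C * ((n : ℝ) ^ 4)⁻¹ := by
      intro j hj
      have hjT : T n ≤ (j : ℝ) := by
        refine le_trans (Nat.le_ceil _) ?_
        exact_mod_cast le_trans (Nat.le_succ _) (Finset.mem_Icc.mp hj).1
      have hpow : ς ^ j ≤ ((n : ℝ) ^ 4)⁻¹ := by
        have h1 : ς ^ j = ς ^ (j : ℝ) := (Real.rpow_natCast ς j).symm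
        have h2 : ς ^ (j : ℝ) ≤ ς ^ (T n) :=
          Real.rpow_le_rpow_of_exponent_ge hς0 hς1.le hjT
        have h3 : ς ^ (T n) = ((n : ℝ) ^ 4)⁻¹ := by
          rw [Real.rpow_def_of_pos hς0, hT]
          have hL : Real.log ς⁻¹ = -Real.log ς := Real.log_inv ς
          have hLne : Real.log ς ≠ 0 := ne_of_lt hlogς
          have h4 : Real.log ς * (4 / Real.log ς⁻¹ * Real.log n)
              = -(4 * Real.log n) := by
            rw [hL]; field_simp
          rw [h4, Real.exp_neg]
          congr 1
          rw [show (4 : ℝ) * Real.log n = ((4 : ℕ) : ℝ) * Real.log n by norm_num,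
            Real.exp_nat_mul, Real.exp_log hn0]
        rw [h1]; exact h2.trans_eq h3
      have h := (abs_le.mp (hcov j n)).2
      have hC' : C * ς ^ j ≤ C * ((n : ℝ) ^ 4)⁻¹ :=
        mul_le_mul_of_nonneg_left hpow hC.le
      linarith
    have hb0 : 0 ≤ (1 - G (u n)) ^ 2 + C * ((n : ℝ) ^ 4)⁻¹ := by positivity
    have hsum := Finset.sum_le_card_nsmul _ _ _ hterm
    rw [nsmul_eq_mul] at hsum
    have hcard : ((Finset.Icc (⌈T n⌉₊ + 1) (n / k)).card : ℝ) ≤ (n : ℝ) / k := by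
      have h1 : (Finset.Icc (⌈T n⌉₊ + 1) (n / k)).card ≤ n / k := by
        rw [Nat.card_Icc, Nat.succ_sub_succ]; exact Nat.sub_le _ _
      exact le_trans (by exact_mod_cast h1) (Nat.cast_div_le)
    have h2 : F k n ≤ (n : ℝ) * (((n : ℝ) / k) * ((1 - G (u n)) ^ 2 + C * ((n : ℝ) ^ 4)⁻¹)) := by
      refine mul_le_mul_of_nonneg_left (le_trans hsum ?_) (Nat.cast_nonneg n)
      exact mul_le_mul_of_nonneg_right hcard hb0
    refine h2.trans ?_
    have heq : (n : ℝ) * (((n : ℝ) / k) * ((1 - G (u n)) ^ 2 + C * ((n : ℝ) ^ 4)⁻¹))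
        = ((n : ℝ) * (1 - G (u n))) ^ 2 / k + C / ((k : ℝ) * (n : ℝ) ^ 2) := by
      field_simp
    rw [heq]
    have : C / ((k : ℝ) * (n : ℝ) ^ 2) ≤ C / (n : ℝ) ^ 2 := by
      apply div_le_div_of_nonneg_left hC.le (by positivity)
      exact le_mul_of_one_le_left (sq_nonneg _) (by exact_mod_cast hk)
    linarith
  -- the comparison sequence and its limit
  have hglim : ∀ k : ℕ, 1 ≤ k → Tendsto
      (fun n : ℕ => ((n : ℝ) * (1 - G (u n))) ^ 2 / k + C / (n : ℝ) ^ 2)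
      atTop (𝓝 (τ ^ 2 / k)) := by
    intro k hk
    have h1 : Tendsto (fun n : ℕ => ((n : ℝ) * (1 - G (u n))) ^ 2 / k)
        atTop (𝓝 (τ ^ 2 / k)) := (hlevels.pow 2).div_const k
    have h2 : Tendsto (fun n : ℕ => C / (n : ℝ) ^ 2) atTop (𝓝 0) := by
      apply Tendsto.div_atTop (tendsto_const_nhds)
      exact (tendsto_pow_atTop (two_ne_zero)).comp tendsto_natCast_atTop_atTop
    simpa using h1.add h2
  -- bounds on the limsup
  have hbddF : ∀ k : ℕ, 1 ≤ k → IsBoundedUnder (· ≤ ·) atTop (F k) := by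
    intro k hk
    obtain ⟨M, hM⟩ := ((hglim k hk).isBoundedUnder_le)
    rw [Filter.eventually_map] at hM
    refine ⟨M, ?_⟩
    rw [Filter.eventually_map]
    filter_upwards [hM, eventually_ge_atTop 1] with n hn hn1
    exact le_trans (key k hk n hn1) hn
  have hup : ∀ k : ℕ, 1 ≤ k → limsup (F k) atTop ≤ τ ^ 2 / k := by
    intro k hk
    have h1 : limsup (F k) atTop ≤ limsup
        (fun n : ℕ => ((n : ℝ) * (1 - G (u n))) ^ 2 / k + C / (n : ℝ) ^ 2) atTop := by
      refine limsup_le_limsup ?_ ?_ ((hglim k hk).isBoundedUnder_le)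
      · filter_upwards [eventually_ge_atTop 1] with n hn using key k hk n hn
      · exact isCoboundedUnder_le_of_le atTop (fun n => hF0 k n)
    rwa [(hglim k hk).limsup_eq] at h1
  have hlo : ∀ k : ℕ, 1 ≤ k → 0 ≤ limsup (F k) atTop := by
    intro k hk
    exact le_limsup_of_frequently_le
      (Frequently.of_forall fun n => hF0 k n) (hbddF k hk)
  -- squeeze
  have hts : Tendsto (fun k : ℕ => τ ^ 2 / (k : ℝ)) atTop (𝓝 0) :=
    tendsto_const_div_atTop_nhds_zero_nat _
  refine tendsto_of_tendsto_of_tendsto_of_le_of_le' tendsto_const_nhds hts ?_ ?_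
  · filter_upwards [eventually_ge_atTop 1] with k hk using hlo k hk
  · filter_upwards [eventually_ge_atTop 1] with k hk using hup k hk
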